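/- Split conformal prediction validity: let s₁,…,s_n, s be exchangeable real-valued random variables (nonconformity scores of calibration data and a test point). Define b = the ⌈(1−α)(n+1)⌉-th smallest value among s₁,…,s_n (with b = +∞ if ⌈(1−α)(n+1)⌉ > n). Then P(s ≤ b) ≥ 1 − α. -/

import Mathlib

open MeasureTheory
open scoped ENNReal

/-- The `k`-th smallest value (1-indexed) among `w 0, …, w (n-1)`. -/
noncomputable def kthSmallest {n : ℕ} (w : Fin n → ℝ) (k : ℕ) : ℝ :=
  ((List.ofFn w).mergeSort (· ≤ ·)).getD (k - 1) 0

namespace SCV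

/-- The strict rank of coordinate `j`. -/
noncomputable def rank {m : ℕ} (x : Fin m → ℝ) (j : Fin m) : ℕ :=
  (Finset.univ.filter fun i => x i < x j).card

lemma card_filter_comp_perm {m : ℕ} (σ : Equiv.Perm (Fin m)) (p : Fin m → Prop)
    [DecidablePred p] :
    (Finset.univ.filter fun i => p (σ i)).card = (Finset.univ.filter p).card := by
  apply Finset.card_bij (fun i _ => σ i)
  · intro a ha
    simp only [Finset.mem_filter, Finset.mem_univ, true_and] at ha ⊢
    exact ha
  · intro a _ b _ h
    exact σ.injective h
  · intro b hb
    refine ⟨σ.symm b, ?_, by simp⟩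
    simp only [Finset.mem_filter, Finset.mem_univ, true_and] at hb ⊢
    simpa using hb

lemma rank_comp {m : ℕ} (x : Fin m → ℝ) (σ : Equiv.Perm (Fin m)) (j : Fin m) :
    rank (x ∘ σ) j = rank x (σ j) := by
  unfold rank
  exact card_filter_comp_perm σ (fun i => x i < x (σ j))

lemma measurable_rank {m : ℕ} (j : Fin m) :
    Measurable fun x : Fin m → ℝ => rank x j := by
  have h : (fun x : Fin m → ℝ => rank x j)
      = fun x => ∑ i : Fin m, if x i < x j then 1 else 0 := by
    funext x
    rw [rank, Finset.card_filter]
  rw [h]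
  exact Finset.measurable_sum _ fun i _ =>
    Measurable.ite (measurableSet_lt (measurable_pi_apply i) (measurable_pi_apply j))
      measurable_const measurable_const

lemma card_filter_val_lt {m c : ℕ} (hc : c ≤ m) :
    (Finset.univ.filter fun l : Fin m => (l : ℕ) < c).card = c := by
  rw [show c = (Finset.range c).card from (Finset.card_range c).symm]
  apply Finset.card_bij (fun (l : Fin m) _ => (l : ℕ))
  · intro a ha
    simp only [Finset.mem_filter, Finset.mem_univ, true_and] at ha
    simpa using ha
  · intro a _ b _ h
    exact Fin.val_injective h
  · intro b hb
    simp only [Finset.mem_range] at hb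
    exact ⟨⟨b, lt_of_lt_of_le hb hc⟩, by simpa using hb, rfl⟩

lemma mergeSort_ofFn_eq {m : ℕ} (w : Fin m → ℝ) :
    (List.ofFn w).mergeSort (· ≤ ·) = List.ofFn (w ∘ Tuple.sort w) :=
  List.Perm.eq_of_sortedLE
    (List.sortedLE_mergeSort (l := List.ofFn w))
    ((Tuple.monotone_sort w).sortedLE_ofFn)
    ((List.mergeSort_perm _ _).trans ((Tuple.sort w).ofFn_comp_perm w).symm)

lemma kthSmallest_eq {m : ℕ} (w : Fin m → ℝ) {k : ℕ} (hk1 : 1 ≤ k) (hk : k ≤ m) :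
    kthSmallest w k = w (Tuple.sort w ⟨k - 1, lt_of_lt_of_le (Nat.sub_lt hk1 one_pos) hk⟩) := by
  have hlen : k - 1 < ((List.ofFn (w ∘ Tuple.sort w))).length := by
    simpa using lt_of_lt_of_le (Nat.sub_lt hk1 one_pos) hk
  rw [kthSmallest, mergeSort_ofFn_eq, List.getD_eq_getElem _ _ hlen]
  simp [List.getElem_ofFn]

lemma le_kthSmallest_iff {m : ℕ} (w : Fin m → ℝ) {k : ℕ} (hk1 : 1 ≤ k) (hk : k ≤ m)
    (s : ℝ) :
    s ≤ kthSmallest w k ↔ (Finset.univ.filter fun i : Fin m => w i < s).card < k := by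
  set τ := Tuple.sort w with hτ
  have hmono := Tuple.monotone_sort w
  have hkm : k - 1 < m := lt_of_lt_of_le (Nat.sub_lt hk1 one_pos) hk
  rw [kthSmallest_eq w hk1 hk]
  have hcard : (Finset.univ.filter fun i : Fin m => w i < s).card
      = (Finset.univ.filter fun l : Fin m => w (τ l) < s).card :=
    (card_filter_comp_perm τ (fun i => w i < s)).symm
  constructor
  · intro hle
    rw [hcard]
    have hsub : (Finset.univ.filter fun l : Fin m => w (τ l) < s)
        ⊆ Finset.univ.filter fun l : Fin m => (l : ℕ) < k - 1 := by
      intro l hl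
      simp only [Finset.mem_filter, Finset.mem_univ, true_and] at hl ⊢
      by_contra hc
      have hle' : (⟨k - 1, hkm⟩ : Fin m) ≤ l := by
        rw [Fin.le_def]
        exact not_lt.mp hc
      exact absurd (le_trans hle (hmono hle')) (not_le.mpr hl)
    calc (Finset.univ.filter fun l : Fin m => w (τ l) < s).card
        ≤ (Finset.univ.filter fun l : Fin m => (l : ℕ) < k - 1).card :=
          Finset.card_le_card hsub
      _ = k - 1 := card_filter_val_lt (le_of_lt hkm)
      _ < k := Nat.sub_lt hk1 one_pos
  · intro hcardlt
    by_contra hc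
    have hlt : w (τ ⟨k - 1, hkm⟩) < s := not_le.mp hc
    have hsub : (Finset.univ.filter fun l : Fin m => (l : ℕ) < k)
        ⊆ Finset.univ.filter fun l : Fin m => w (τ l) < s := by
      intro l hl
      simp only [Finset.mem_filter, Finset.mem_univ, true_and] at hl ⊢
      have hle' : l ≤ (⟨k - 1, hkm⟩ : Fin m) := by
        rw [Fin.le_def]
        exact Nat.le_sub_one_of_lt hl
      exact lt_of_le_of_lt (hmono hle') hlt
    have : k ≤ (Finset.univ.filter fun l : Fin m => w (τ l) < s).card := by
      calc k = (Finset.univ.filter fun l : Fin m => (l : ℕ) < k).card :=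
            (card_filter_val_lt hk).symm
        _ ≤ _ := Finset.card_le_card hsub
    rw [hcard] at hcardlt
    omega

lemma le_card_rank_lt {m : ℕ} (x : Fin m → ℝ) {k : ℕ} (hk : k ≤ m) :
    k ≤ (Finset.univ.filter fun j => rank x j < k).card := by
  set τ := Tuple.sort x with hτ
  have hmono := Tuple.monotone_sort x
  have hrank : ∀ l : Fin m, (l : ℕ) < k → rank x (τ l) < k := by
    intro l hl
    rw [← rank_comp x τ l]
    have hsub : (Finset.univ.filter fun i : Fin m => (x ∘ τ) i < (x ∘ τ) l)
        ⊆ Finset.univ.filter fun i : Fin m => (i : ℕ) < (l : ℕ) := by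
      intro i hi
      simp only [Finset.mem_filter, Finset.mem_univ, true_and] at hi ⊢
      by_contra hc
      have : l ≤ i := by rw [Fin.le_def]; exact not_lt.mp hc
      exact absurd (hmono this) (not_le.mpr hi)
    calc rank (x ∘ τ) l ≤ (Finset.univ.filter fun i : Fin m => (i : ℕ) < (l : ℕ)).card :=
          Finset.card_le_card hsub
      _ = (l : ℕ) := card_filter_val_lt (le_of_lt l.isLt)
      _ < k := hl
  calc k = ((Finset.univ.filter fun l : Fin m => (l : ℕ) < k).image τ).card := by
        rw [Finset.card_image_of_injective _ τ.injective, card_filter_val_lt hk]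
    _ ≤ (Finset.univ.filter fun j => rank x j < k).card := by
        apply Finset.card_le_card
        intro j hj
        simp only [Finset.mem_image, Finset.mem_filter, Finset.mem_univ, true_and] at hj ⊢
        obtain ⟨l, hl, rfl⟩ := hj
        exact hrank l hl

lemma rank_last {n : ℕ} (x : Fin (n + 1) → ℝ) :
    rank x (Fin.last n)
      = (Finset.univ.filter fun i : Fin n => x i.castSucc < x (Fin.last n)).card := by
  unfold rank
  rw [Finset.card_filter, Finset.card_filter, Fin.sum_univ_castSucc]
  simp

end SCV

/-- Split conformal prediction validity: if the scores `S 0, …, S (n-1), S n` are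
exchangeable, and `b` is the `⌈(1−α)(n+1)⌉`-th smallest of the first `n` scores
(`b = +∞`, i.e. no constraint, if `⌈(1−α)(n+1)⌉ > n`), then the test score
`S n` satisfies `P(S n ≤ b) ≥ 1 − α`. -/
theorem split_conformal_validity
    {Ω : Type*} [MeasurableSpace Ω] (μ : Measure Ω) [IsProbabilityMeasure μ]
    (n : ℕ) (S : Ω → Fin (n + 1) → ℝ) (hS : Measurable S)
    (hexch : ∀ σ : Equiv.Perm (Fin (n + 1)),
      Measure.map (fun ω i => S ω (σ i)) μ = Measure.map S μ)
    (α : ℝ) (hα : α ∈ Set.Ioo (0 : ℝ) 1) :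
    ENNReal.ofReal (1 - α) ≤
      μ {ω | ⌈(1 - α) * (n + 1)⌉₊ ≤ n →
        S ω (Fin.last n) ≤
          kthSmallest (fun i : Fin n => S ω i.castSucc) ⌈(1 - α) * (n + 1)⌉₊} := by
  set k : ℕ := ⌈(1 - α) * (n + 1)⌉₊ with hkdef
  have hα1 : 0 < 1 - α := by linarith [hα.2]
  by_cases hkn : k ≤ n
  · -- main case
    have hk1 : 1 ≤ k := by
      rw [hkdef]
      exact Nat.one_le_ceil_iff.mpr (by positivity)
    -- the events
    set A : Fin (n + 1) → Set (Fin (n + 1) → ℝ) := fun j => {x | SCV.rank x j < k} with hAdef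
    have hA : ∀ j, MeasurableSet (A j) := by
      intro j
      have : A j = (fun x => SCV.rank x j) ⁻¹' (Set.Iio k) := rfl
      rw [this]
      exact SCV.measurable_rank j MeasurableSpace.measurableSet_top
    have hB : ∀ j, MeasurableSet (S ⁻¹' A j) := fun j => hS (hA j)
    -- the target event equals `S ⁻¹' A (Fin.last n)`
    have hevent : {ω | k ≤ n →
        S ω (Fin.last n) ≤ kthSmallest (fun i : Fin n => S ω i.castSucc) k}
        = S ⁻¹' A (Fin.last n) := by
      ext ω
      simp only [Set.mem_setOf_eq, Set.mem_preimage, hAdef]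
      constructor
      · intro h
        have h' := h hkn
        rw [SCV.le_kthSmallest_iff _ hk1 hkn] at h'
        rw [SCV.rank_last]
        exact h'
      · intro h _
        rw [SCV.le_kthSmallest_iff _ hk1 hkn]
        rw [SCV.rank_last] at h
        exact h
    rw [hevent]
    -- exchangeability: all events have the same probability
    have hsame : ∀ j : Fin (n + 1), μ (S ⁻¹' A j) = μ (S ⁻¹' A (Fin.last n)) := by
      intro j
      set σ : Equiv.Perm (Fin (n + 1)) := Equiv.swap (Fin.last n) j with hσdef
      have hσlast : σ (Fin.last n) = j := Equiv.swap_apply_left _ _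
      have hmeas2 : Measurable fun ω i => S ω (σ i) :=
        measurable_pi_lambda _ fun i => (measurable_pi_apply (σ i)).comp hS
      have := congrArg (fun ν => ν (A (Fin.last n))) (hexch σ)
      simp only [Measure.map_apply hmeas2 (hA (Fin.last n)),
        Measure.map_apply hS (hA (Fin.last n))] at this
      rw [← this]
      congr 1
      ext ω
      simp only [Set.mem_preimage, hAdef, Set.mem_setOf_eq]
      have : SCV.rank (fun i => S ω (σ i)) (Fin.last n) = SCV.rank (S ω) j := by
        have := SCV.rank_comp (S ω) σ (Fin.last n)
        rw [hσlast] at this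
        exact this
      rw [this]
    -- counting lower bound
    have hsum : (k : ℝ≥0∞) ≤ ∑ j : Fin (n + 1), μ (S ⁻¹' A j) := by
      have heq : ∀ j : Fin (n + 1), μ (S ⁻¹' A j)
          = ∫⁻ ω, (S ⁻¹' A j).indicator 1 ω ∂μ := fun j =>
        (lintegral_indicator_one (hB j)).symm
      calc (k : ℝ≥0∞) = ∫⁻ _, (k : ℝ≥0∞) ∂μ := by simp
        _ ≤ ∫⁻ ω, ∑ j : Fin (n + 1), (S ⁻¹' A j).indicator 1 ω ∂μ := by
            apply lintegral_mono
            intro ω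
            show (k : ℝ≥0∞) ≤ ∑ j : Fin (n + 1), (S ⁻¹' A j).indicator 1 ω
            have hcount : k ≤ (Finset.univ.filter fun j => SCV.rank (S ω) j < k).card :=
              SCV.le_card_rank_lt (S ω) (le_trans hkn (Nat.le_succ n))
            have : ∑ j : Fin (n + 1), (S ⁻¹' A j).indicator 1 ω
                = ((Finset.univ.filter fun j => SCV.rank (S ω) j < k).card : ℝ≥0∞) := by
              rw [Finset.card_filter]
              push_cast
              apply Finset.sum_congr rfl
              intro j _
              by_cases hj : SCV.rank (S ω) j < k
              · simp [Set.indicator, hj, Set.mem_preimage, hAdef]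
              · simp [Set.indicator, hj, Set.mem_preimage, hAdef]
            rw [this]
            exact_mod_cast Nat.cast_le.mpr hcount
        _ = ∑ j : Fin (n + 1), μ (S ⁻¹' A j) := by
            rw [lintegral_finset_sum]
            · exact (Finset.sum_congr rfl fun j _ => (heq j).symm)
            · exact fun j _ => measurable_one.indicator (hB j)
    have hsum' : (k : ℝ≥0∞) ≤ ((n + 1 : ℕ) : ℝ≥0∞) * μ (S ⁻¹' A (Fin.last n)) := by
      calc (k : ℝ≥0∞) ≤ ∑ j : Fin (n + 1), μ (S ⁻¹' A j) := hsum
        _ = ((n + 1 : ℕ) : ℝ≥0∞) * μ (S ⁻¹' A (Fin.last n)) := by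
            rw [Finset.sum_congr rfl fun j _ => hsame j, Finset.sum_const]
            simp [mul_comm]
    -- conclude
    have hmul : ((n + 1 : ℕ) : ℝ≥0∞) * ENNReal.ofReal (1 - α)
        ≤ ((n + 1 : ℕ) : ℝ≥0∞) * μ (S ⁻¹' A (Fin.last n)) := by
      refine le_trans ?_ hsum'
      have h1 : ((n + 1 : ℕ) : ℝ≥0∞) * ENNReal.ofReal (1 - α)
          = ENNReal.ofReal ((1 - α) * (n + 1)) := by
        rw [← ENNReal.ofReal_natCast (n + 1), ← ENNReal.ofReal_mul (by positivity)]
        congr 1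
        push_cast
        ring
      rw [h1]
      calc ENNReal.ofReal ((1 - α) * (n + 1)) ≤ ENNReal.ofReal (k : ℝ) :=
            ENNReal.ofReal_le_ofReal (Nat.le_ceil _)
        _ = (k : ℝ≥0∞) := ENNReal.ofReal_natCast k
    exact (ENNReal.mul_le_mul_iff_right (by exact_mod_cast Nat.succ_ne_zero n)
      (ENNReal.natCast_ne_top _)).mp hmul
  · -- trivial case: the event is everything
    have : {ω | k ≤ n →
        S ω (Fin.last n) ≤ kthSmallest (fun i : Fin n => S ω i.castSucc) k}
        = Set.univ := Set.eq_univ_of_forall fun ω h => absurd h hkn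
    rw [this, measure_univ]
    exact ENNReal.ofReal_le_one.mpr (by linarith [hα.1])
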